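/- Let n ≥ 2 and let u, v ∈ ℝ^n be unit vectors with ⟨u, v⟩ = 0. Then ∑_{1 ≤ i < j ≤ n} |u_i v_j − u_j v_i| ≥ 1, with equality when u and v are two distinct standard basis vectors of ℝ^n. -/
import Mathlib


open Finset Real

lemma lagrange_aux (n : ℕ) (u v : Fin n → ℝ)
    (hu : ∑ j, (u j) ^ 2 = 1) (hv : ∑ j, (v j) ^ 2 = 1) (huv : ∑ j, u j * v j = 0) :
    ∑ i, ∑ j ∈ Finset.Ioi i, (u i * v j - u j * v i) ^ 2 = 1 := by
  have full : ∑ i, ∑ j, (u i * v j - u j * v i) ^ 2 = 2 := by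
    have h : ∀ i j : Fin n, (u i * v j - u j * v i) ^ 2
        = u i ^ 2 * v j ^ 2 + u j ^ 2 * v i ^ 2 - 2 * ((u i * v i) * (u j * v j)) := by
      intro i j; ring
    simp_rw [h, Finset.sum_sub_distrib, Finset.sum_add_distrib, ← Finset.mul_sum,
      ← Finset.sum_mul, hu, hv, huv, one_mul]
    rw [hv]; norm_num
  have key := Finset.sum_sum_Ioi_add_eq_sum_sum_off_diag
    (fun i j => (u i * v j - u j * v i) ^ 2)
  have compl : ∀ i : Fin n, ∑ j ∈ ({i}ᶜ : Finset (Fin n)), (u j * v i - u i * v j) ^ 2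
      = ∑ j, (u j * v i - u i * v j) ^ 2 := by
    intro i
    rw [← Finset.sum_compl_add_sum ({i} : Finset (Fin n))]
    simp
  have full' : ∑ i, ∑ j, (u j * v i - u i * v j) ^ 2 = 2 := by
    rw [Finset.sum_comm]; exact full
  have hsym : ∀ i j : Fin n, (u j * v i - u i * v j) ^ 2 = (u i * v j - u j * v i) ^ 2 := by
    intro i j; ring
  have : ∑ i, ∑ j ∈ Finset.Ioi i,
      ((u j * v i - u i * v j) ^ 2 + (u i * v j - u j * v i) ^ 2) = 2 := by
    rw [key]
    refine Eq.trans (Finset.sum_congr rfl fun i _ =>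
      Finset.sum_subset (Finset.subset_univ _) fun j _ hj => ?_) full'
    have hji : j = i := by simpa using hj
    subst hji; ring
  simp_rw [hsym, ← two_mul, ← Finset.mul_sum] at this
  linarith

theorem stmt_16 (n : ℕ) (hn : 2 ≤ n) (u v : Fin n → ℝ)
    (hu : ∑ j, (u j) ^ 2 = 1) (hv : ∑ j, (v j) ^ 2 = 1) (huv : ∑ j, u j * v j = 0) :
    1 ≤ ∑ i, ∑ j ∈ Finset.Ioi i, |u i * v j - u j * v i| ∧
      ∀ p q : Fin n, p ≠ q →
        ∀ e f : Fin n → ℝ, e = Pi.single p 1 → f = Pi.single q 1 →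
          ∑ i, ∑ j ∈ Finset.Ioi i, |e i * f j - e j * f i| = 1 := by
  constructor
  · have lag := lagrange_aux n u v hu hv huv
    have hterm : ∀ i : Fin n, ∀ j ∈ Finset.Ioi i,
        (u i * v j - u j * v i) ^ 2 ≤ |u i * v j - u j * v i| := by
      intro i j hj
      have hle1 : (u i * v j - u j * v i) ^ 2 ≤ 1 := by
        rw [← lag]
        have h1 : (u i * v j - u j * v i) ^ 2
            ≤ ∑ j ∈ Finset.Ioi i, (u i * v j - u j * v i) ^ 2 :=
          Finset.single_le_sum (f := fun k => (u i * v k - u k * v i) ^ 2)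
            (fun k _ => sq_nonneg _) hj
        have h2 : ∑ j ∈ Finset.Ioi i, (u i * v j - u j * v i) ^ 2
            ≤ ∑ i, ∑ j ∈ Finset.Ioi i, (u i * v j - u j * v i) ^ 2 :=
          Finset.single_le_sum (f := fun k => ∑ j ∈ Finset.Ioi k, (u k * v j - u j * v k) ^ 2)
            (fun k _ => Finset.sum_nonneg fun _ _ => sq_nonneg _) (Finset.mem_univ i)
        linarith
      nlinarith [sq_abs (u i * v j - u j * v i), abs_nonneg (u i * v j - u j * v i),
        sq_nonneg (|u i * v j - u j * v i| - 1)]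
    calc (1:ℝ) = ∑ i, ∑ j ∈ Finset.Ioi i, (u i * v j - u j * v i) ^ 2 := lag.symm
      _ ≤ ∑ i, ∑ j ∈ Finset.Ioi i, |u i * v j - u j * v i| :=
          Finset.sum_le_sum fun i _ => Finset.sum_le_sum (hterm i)
  · intro p q hpq e f he hf
    have he2 : ∑ j, (e j) ^ 2 = 1 := by subst he; simp [Pi.single_apply, sq]
    have hf2 : ∑ j, (f j) ^ 2 = 1 := by subst hf; simp [Pi.single_apply, sq]
    have hef : ∑ j, e j * f j = 0 := by
      subst he hf
      rw [Finset.sum_eq_zero]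
      intro j _
      rcases eq_or_ne j p with rfl | h
      · simp [Pi.single_eq_of_ne hpq]
      · simp [Pi.single_eq_of_ne h]
    have habs : ∀ i j : Fin n, |e i * f j - e j * f i| = (e i * f j - e j * f i) ^ 2 := by
      intro i j
      subst he hf
      simp only [Pi.single_apply]
      rcases eq_or_ne i p with h1 | h1 <;> rcases eq_or_ne j q with h2 | h2 <;>
        rcases eq_or_ne i q with h3 | h3 <;> rcases eq_or_ne j p with h4 | h4 <;>
        simp_all <;> norm_num
    calc ∑ i, ∑ j ∈ Finset.Ioi i, |e i * f j - e j * f i|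
        = ∑ i, ∑ j ∈ Finset.Ioi i, (e i * f j - e j * f i) ^ 2 :=
          Finset.sum_congr rfl fun i _ => Finset.sum_congr rfl fun j _ => habs i j
      _ = 1 := lagrange_aux n e f he2 hf2 hef
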